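/- Let M = [a,b) and N = [c,d) be interval modules (0 ≤ a < b, 0 ≤ c < d) with m₁ = m₂, and set D = m₁ and E = max{|a−d|, |b−c|}. Then D < E and: (a) for every ε with D ≤ ε < E, exactly one of Hom(M, N·ε), Hom(N, M·ε) is nonzero, and Hom(M, M·2ε) = Hom(N, N·2ε) = 0; (b) for every ε ≥ E, all four spaces Hom(M, N·ε), Hom(N, M·ε), Hom(M, M·2ε), Hom(N, N·2ε) are zero. (This expresses that for interval modules the progression of varieties of ε-interleavings in the case m₁ = m₂ is: coordinate axis, origin.) -/

import Mathlib

open scoped NNReal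

/-- A persistence module: a functor from `[0,∞)` to real vector spaces. -/
structure PM where
  V : ℝ≥0 → Type
  [grp : ∀ x, AddCommGroup (V x)]
  [mod : ∀ x, Module ℝ (V x)]
  map : ∀ {x y : ℝ≥0}, x ≤ y → (V x →ₗ[ℝ] V y)
  map_id : ∀ x : ℝ≥0, map (le_refl x) = LinearMap.id
  map_comp : ∀ {x y z : ℝ≥0} (h1 : x ≤ y) (h2 : y ≤ z),
    (map h2).comp (map h1) = map (h1.trans h2)

attribute [instance] PM.grp PM.mod

/-- A morphism of persistence modules. -/
structure PM.Hom (M N : PM) where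
  app : ∀ x : ℝ≥0, M.V x →ₗ[ℝ] N.V x
  comm : ∀ {x y : ℝ≥0} (h : x ≤ y), (app y).comp (M.map h) = (N.map h).comp (app x)

/-- The shifted module `M·ε`. -/
def PM.shift (M : PM) (ε : ℝ≥0) : PM where
  V x := M.V (x + ε)
  grp x := inferInstance
  mod x := inferInstance
  map h := M.map (add_le_add h (le_refl ε))
  map_id x := M.map_id (x + ε)
  map_comp h1 h2 := M.map_comp _ _

noncomputable def intervalSub (α β : ℝ) (x : ℝ≥0) : Submodule ℝ ℝ :=
  if α ≤ (x : ℝ) ∧ (x : ℝ) < β then ⊤ else ⊥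

/-- The interval module `[α,β)`. -/
noncomputable def intervalModule (α β : ℝ) : PM where
  V x := ↥(intervalSub α β x)
  grp x := inferInstance
  mod x := inferInstance
  map {x y} h := LinearMap.codRestrict _
      ((if α ≤ (x : ℝ) ∧ (y : ℝ) < β then (1 : ℝ) else 0) • (intervalSub α β x).subtype)
      (by
        intro v
        by_cases hy : α ≤ (y : ℝ) ∧ (y : ℝ) < β
        · simp [intervalSub, hy]
        · have hc : ¬(α ≤ (x : ℝ) ∧ (y : ℝ) < β) := by
            intro hc
            exact hy ⟨le_trans hc.1 (by exact_mod_cast h), hc.2⟩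
          rw [if_neg hc, zero_smul, LinearMap.zero_apply]; exact Submodule.zero_mem _)
  map_id x := by
    ext v
    by_cases hx : α ≤ (x : ℝ) ∧ (x : ℝ) < β
    · simp [hx]
    · have hv : (v : ℝ) = 0 := by
        have h2 := v.2
        simp only [intervalSub, if_neg hx, Submodule.mem_bot] at h2
        exact h2
      simp [hx, hv]
  map_comp {x y z} h1 h2 := by
    ext v
    by_cases hC : α ≤ (x : ℝ) ∧ (z : ℝ) < β
    · have hA : α ≤ (x : ℝ) ∧ (y : ℝ) < β :=
        ⟨hC.1, lt_of_le_of_lt (by exact_mod_cast h2) hC.2⟩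
      have hB : α ≤ (y : ℝ) ∧ (z : ℝ) < β :=
        ⟨le_trans hC.1 (by exact_mod_cast h1), hC.2⟩
      simp [hA, hB, hC]
    · rcases not_and_or.mp hC with hx | hz
      · have hA : ¬(α ≤ (x : ℝ) ∧ (y : ℝ) < β) := fun h => hx h.1
        simp [hA, hC]
        split_ifs <;> simp
      · have hB : ¬(α ≤ (y : ℝ) ∧ (z : ℝ) < β) := fun h => hz h.2
        simp [hB, hC]

/-- `Hom(M,N) ≠ {0}`: there is a nonzero morphism from `M` to `N`. -/
def HomNeZero (M N : PM) : Prop := ∃ F : PM.Hom M N, ∃ x, F.app x ≠ 0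

/-- `S_{M,N} = {x ≥ 0 : Hom(M, N·x) ≠ {0}}`. -/
noncomputable def Sset (M N : PM) : Set ℝ :=
  {x : ℝ | 0 ≤ x ∧ HomNeZero M (N.shift x.toNNReal)}

/-- The canonical morphism `Π_M^{M·τ} : M → M·τ`. -/
def PM.pi (M : PM) (τ : ℝ≥0) : M.Hom (M.shift τ) where
  app x := M.map le_self_add
  comm {x y} h := by
    show (M.map le_self_add).comp (M.map h) =
      (M.map (add_le_add h (le_refl τ))).comp (M.map le_self_add)
    rw [M.map_comp, M.map_comp]

/-- The pair `(Φ, Ψ)` is an `ε`-interleaving between `M` and `N`: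
`(Ψ·ε) ∘ Φ = Π_M^{M·2ε}` and `(Φ·ε) ∘ Ψ = Π_N^{N·2ε}` (expressed pointwise). -/
def IsInterleaving (M N : PM) (ε : ℝ≥0)
    (Φ : M.Hom (N.shift ε)) (Ψ : N.Hom (M.shift ε)) : Prop :=
  (∀ x : ℝ≥0, (Ψ.app (x + ε)).comp (Φ.app x) =
      M.map (le_self_add.trans le_self_add : x ≤ x + ε + ε)) ∧
  (∀ x : ℝ≥0, (Φ.app (x + ε)).comp (Ψ.app x) =
      N.map (le_self_add.trans le_self_add : x ≤ x + ε + ε))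

lemma im_map_val (α β : ℝ) {x y : ℝ≥0} (h : x ≤ y) (v : ↥(intervalSub α β x)) :
    ((intervalModule α β).map h v).val =
      (if α ≤ (x : ℝ) ∧ (y : ℝ) < β then (1:ℝ) else 0) * v.val := rfl

lemma im_val_zero {α β : ℝ} {x : ℝ≥0} (hx : ¬(α ≤ (x:ℝ) ∧ (x:ℝ) < β))
    (v : ↥(intervalSub α β x)) : v.val = 0 := by
  have h2 := v.2
  simpa [intervalSub, if_neg hx] using h2

lemma im_mem {α β : ℝ} {x : ℝ≥0} (hx : α ≤ (x:ℝ) ∧ (x:ℝ) < β) (r : ℝ) :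
    r ∈ intervalSub α β x := by
  simp [intervalSub, hx]
noncomputable def crossHom (a b c d : ℝ) (t : ℝ≥0) (h1 : c ≤ a + t) (h3 : d ≤ b + t) :
    PM.Hom (intervalModule a b) ((intervalModule c d).shift t) where
  app x := LinearMap.codRestrict (intervalSub c d (x + t))
    ((if (a ≤ (x:ℝ) ∧ (x:ℝ) < b) ∧ (c ≤ ((x + t : ℝ≥0):ℝ) ∧ ((x + t : ℝ≥0):ℝ) < d)
        then (1:ℝ) else 0) • (intervalSub a b x).subtype)
    (by
      intro v
      by_cases hC : (a ≤ (x:ℝ) ∧ (x:ℝ) < b) ∧ (c ≤ ((x + t : ℝ≥0):ℝ) ∧ ((x + t : ℝ≥0):ℝ) < d)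
      · rw [if_pos hC]
        exact im_mem hC.2 _
      · rw [if_neg hC]
        simp; exact Submodule.zero_mem _)
  comm {x y} h := by
    ext v
    apply Subtype.ext
    have hxy : (x:ℝ) ≤ (y:ℝ) := NNReal.coe_le_coe.mpr h
    have hxt : ((x + t : ℝ≥0):ℝ) = (x:ℝ) + (t:ℝ) := by push_cast; ring
    have hyt : ((y + t : ℝ≥0):ℝ) = (y:ℝ) + (t:ℝ) := by push_cast; ring
    show (if (a ≤ (y:ℝ) ∧ (y:ℝ) < b) ∧ (c ≤ ((y + t : ℝ≥0):ℝ) ∧ ((y + t : ℝ≥0):ℝ) < d)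
        then (1:ℝ) else 0) * ((intervalModule a b).map h v).val =
      (if c ≤ ((x + t : ℝ≥0):ℝ) ∧ ((y + t : ℝ≥0):ℝ) < d then (1:ℝ) else 0) *
        ((if (a ≤ (x:ℝ) ∧ (x:ℝ) < b) ∧ (c ≤ ((x + t : ℝ≥0):ℝ) ∧ ((x + t : ℝ≥0):ℝ) < d)
        then (1:ℝ) else 0) * v.val)

    erw [im_map_val]
    by_cases hP : a ≤ (x:ℝ) ∧ (x:ℝ) < b
    · by_cases hC3 : c ≤ ((x + t : ℝ≥0):ℝ) ∧ ((y + t : ℝ≥0):ℝ) < d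
      · have hyb : (y:ℝ) < b := by rw [hyt] at hC3; linarith [hC3.2]
        have hC1 : (a ≤ (y:ℝ) ∧ (y:ℝ) < b) ∧ (c ≤ ((y + t : ℝ≥0):ℝ) ∧ ((y + t : ℝ≥0):ℝ) < d) := by
          refine ⟨⟨le_trans hP.1 hxy, hyb⟩, ?_, hC3.2⟩
          rw [hyt]; rw [hxt] at hC3; linarith [hC3.1]
        have hC4 : (a ≤ (x:ℝ) ∧ (x:ℝ) < b) ∧ (c ≤ ((x + t : ℝ≥0):ℝ) ∧ ((x + t : ℝ≥0):ℝ) < d) := by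
          refine ⟨hP, hC3.1, ?_⟩
          rw [hxt]; rw [hyt] at hC3; linarith [hC3.2]
        rw [if_pos hC1, if_pos hC3, if_pos hC4, if_pos ⟨hP.1, hyb⟩]
      · rw [if_neg hC3]
        have hno : ¬(((a ≤ (y:ℝ) ∧ (y:ℝ) < b) ∧ (c ≤ ((y + t : ℝ≥0):ℝ) ∧ ((y + t : ℝ≥0):ℝ) < d))
            ∧ (a ≤ (x:ℝ) ∧ (y:ℝ) < b)) := by
          intro hcc
          refine hC3 ⟨?_, hcc.1.2.2⟩
          rw [hxt]; linarith
        by_cases hC1 : (a ≤ (y:ℝ) ∧ (y:ℝ) < b) ∧ (c ≤ ((y + t : ℝ≥0):ℝ) ∧ ((y + t : ℝ≥0):ℝ) < d)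
        · have : ¬(a ≤ (x:ℝ) ∧ (y:ℝ) < b) := fun hm => hno ⟨hC1, hm⟩
          rw [if_pos hC1, if_neg this]
          ring
        · rw [if_neg hC1]
          ring
    · have hv : v.val = 0 := im_val_zero hP v
      rw [hv]
      ring
lemma homNeZero_iff (a b c d : ℝ) (ha : 0 ≤ a) (hab : a < b) (hc : 0 ≤ c) (hcd : c < d)
    (t : ℝ≥0) :
    HomNeZero (intervalModule a b) ((intervalModule c d).shift t) ↔
      (c ≤ a + t ∧ a + t < d ∧ d ≤ b + t) := by
  constructor
  · rintro ⟨F, x, hx⟩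
    obtain ⟨v, hv⟩ := DFunLike.ne_iff.mp hx
    have hvv : (F.app x v).val ≠ 0 := by
      intro h0
      exact hv (Subtype.ext h0)
    -- target nontrivial
    have hcx : c ≤ ((x + t : ℝ≥0):ℝ) ∧ ((x + t : ℝ≥0):ℝ) < d := by
      by_contra hcc
      exact hvv (im_val_zero hcc _)
    have hax : a ≤ (x:ℝ) ∧ (x:ℝ) < b := by
      by_contra hcc
      have hv0 : v = 0 := Subtype.ext (im_val_zero hcc v)
      rw [hv0, map_zero] at hvv
      exact hvv rfl
    have hxt : ((x + t : ℝ≥0):ℝ) = (x:ℝ) + (t:ℝ) := by push_cast; ring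
    rw [hxt] at hcx
    refine ⟨?_, by linarith [hax.1, hcx.2], ?_⟩
    · -- c ≤ a + t
      by_contra hcon
      push_neg at hcon
      set a' : ℝ≥0 := a.toNNReal with ha'
      have ha'v : (a' : ℝ) = a := Real.coe_toNNReal a ha
      have hale : a' ≤ x := by
        rw [← NNReal.coe_le_coe, ha'v]; exact hax.1
      have hmem : v.val ∈ intervalSub a b a' := im_mem ⟨le_of_eq ha'v.symm, by rw [ha'v]; exact hab⟩ _
      set w : ↥(intervalSub a b a') := ⟨v.val, hmem⟩ with hw
      have hmw : (intervalModule a b).map hale w = v := by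
        apply Subtype.ext
        rw [im_map_val, if_pos ⟨le_of_eq ha'v.symm, hax.2⟩]
        simp [hw]
      have hcomm := congrArg (fun f => f w) (F.comm hale)
      change F.app x ((intervalModule a b).map hale w) = ((intervalModule c d).shift t).map hale (F.app a' w) at hcomm
      rw [hmw] at hcomm
      -- F.app a' w lives in bot
      have hbot : ¬(c ≤ ((a' + t : ℝ≥0):ℝ) ∧ ((a' + t : ℝ≥0):ℝ) < d) := by
        intro hcc
        have : ((a' + t : ℝ≥0):ℝ) = a + t := by push_cast [ha'v]; ring
        rw [this] at hcc
        linarith [hcc.1]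
      have hz : (F.app a' w).val = 0 := im_val_zero hbot _
      have : (F.app a' w) = 0 := Subtype.ext hz
      rw [this, map_zero] at hcomm
      rw [hcomm] at hv
      exact hv rfl
    · -- d ≤ b + t
      by_contra hcon
      push_neg at hcon
      set y : ℝ≥0 := b.toNNReal with hy
      have hyv : (y : ℝ) = b := Real.coe_toNNReal b (le_of_lt (lt_of_le_of_lt ha hab))
      have hxy : x ≤ y := by
        rw [← NNReal.coe_le_coe, hyv]; exact le_of_lt hax.2
      have hcomm := congrArg (fun f => f v) (F.comm hxy)
      simp only [LinearMap.comp_apply] at hcomm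
      have hmv : (intervalModule a b).map hxy v = 0 := by
        apply Subtype.ext
        erw [im_map_val, if_neg (by rw [hyv]; exact fun hcc => lt_irrefl b hcc.2)]
        simp; rfl
      rw [hmv, map_zero] at hcomm
      -- RHS nonzero
      have hyt : ((y + t : ℝ≥0):ℝ) = b + (t:ℝ) := by push_cast [hyv]; ring
      have hval0 : ((((intervalModule c d).shift t).map hxy) (F.app x v)).val
          = (if c ≤ ((x + t : ℝ≥0):ℝ) ∧ ((y + t : ℝ≥0):ℝ) < d then (1:ℝ) else 0)
            * (F.app x v).val := rfl
      have hval : ((((intervalModule c d).shift t).map hxy) (F.app x v)).val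
          = (F.app x v).val := by
        rw [hval0, if_pos ⟨by rw [hxt]; exact hcx.1, by rw [hyt]; linarith⟩, one_mul]
      rw [← hcomm] at hval
      change (0:ℝ) = _ at hval
      exact hvv hval.symm
  · rintro ⟨h1, h2, h3⟩
    refine ⟨crossHom a b c d t h1 h3, a.toNNReal, ?_⟩
    have ha'v : ((a.toNNReal : ℝ≥0) : ℝ) = a := Real.coe_toNNReal a ha
    have hmem : (1:ℝ) ∈ intervalSub a b a.toNNReal := im_mem ⟨le_of_eq ha'v.symm, by rw [ha'v]; exact hab⟩ _
    intro h0
    have := congrArg (fun f => (f ⟨1, hmem⟩ : ↥(intervalSub c d (a.toNNReal + t))).val) h0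
    change _ = (0:ℝ) at this
    have hcond : (a ≤ (a.toNNReal:ℝ) ∧ (a.toNNReal:ℝ) < b) ∧
        (c ≤ ((a.toNNReal + t : ℝ≥0):ℝ) ∧ ((a.toNNReal + t : ℝ≥0):ℝ) < d) := by
      have : ((a.toNNReal + t : ℝ≥0):ℝ) = a + t := by push_cast [ha'v]; ring
      rw [this, ha'v]
      exact ⟨⟨le_refl a, hab⟩, h1, h2⟩
    have hlhs : ((crossHom a b c d t h1 h3).app a.toNNReal ⟨1, hmem⟩ :
        ↥(intervalSub c d (a.toNNReal + t))).val = 1 := by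
      show (if (a ≤ ((a.toNNReal : ℝ≥0):ℝ) ∧ ((a.toNNReal : ℝ≥0):ℝ) < b) ∧
          (c ≤ ((a.toNNReal + t : ℝ≥0):ℝ) ∧ ((a.toNNReal + t : ℝ≥0):ℝ) < d)
          then (1:ℝ) else 0) * 1 = 1
      rw [if_pos hcond, one_mul]
    rw [hlhs] at this
    simp at this
theorem stmt1 (a b c d : ℝ) (ha : 0 ≤ a) (hab : a < b) (hc : 0 ≤ c) (hcd : c < d)
    (m₁ m₂ D E : ℝ)
    (hm1 : m₁ = max |a - c| |b - d|) (hm2 : m₂ = max ((b - a) / 2) ((d - c) / 2))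
    (hD : D = m₁) (hE : E = max |a - d| |b - c|) (hm : m₁ = m₂) :
    D < E ∧
    (∀ ε : ℝ, D ≤ ε → ε < E →
      Xor' (HomNeZero (intervalModule a b) ((intervalModule c d).shift (ε).toNNReal)) (HomNeZero (intervalModule c d) ((intervalModule a b).shift (ε).toNNReal)) ∧
      ¬ HomNeZero (intervalModule a b) ((intervalModule a b).shift (2*ε).toNNReal) ∧ ¬ HomNeZero (intervalModule c d) ((intervalModule c d).shift (2*ε).toNNReal)) ∧
    (∀ ε : ℝ, E ≤ ε →
      ¬ HomNeZero (intervalModule a b) ((intervalModule c d).shift (ε).toNNReal) ∧ ¬ HomNeZero (intervalModule c d) ((intervalModule a b).shift (ε).toNNReal) ∧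
      ¬ HomNeZero (intervalModule a b) ((intervalModule a b).shift (2*ε).toNNReal) ∧ ¬ HomNeZero (intervalModule c d) ((intervalModule c d).shift (2*ε).toNNReal)) := by
  have hDm : D = m₂ := hD.trans hm
  have hDu : (b - a) / 2 ≤ D := by rw [hDm, hm2]; exact le_max_left _ _
  have hDv : (d - c) / 2 ≤ D := by rw [hDm, hm2]; exact le_max_right _ _
  have hD0 : 0 < D := lt_of_lt_of_le (by linarith) hDu
  have hDca : c - a ≤ D := by
    rw [hD, hm1]; calc c - a ≤ |a - c| := by rw [abs_sub_comm]; exact le_abs_self _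
      _ ≤ _ := le_max_left _ _
  have hDdb : d - b ≤ D := by
    rw [hD, hm1]; calc d - b ≤ |b - d| := by rw [abs_sub_comm]; exact le_abs_self _
      _ ≤ _ := le_max_right _ _
  have hDac : a - c ≤ D := by
    rw [hD, hm1]; exact le_trans (le_abs_self _) (le_max_left _ _)
  have hDbd : b - d ≤ D := by
    rw [hD, hm1]; exact le_trans (le_abs_self _) (le_max_right _ _)
  have hE1 : d - a ≤ E := by
    rw [hE]; calc d - a ≤ |a - d| := by rw [abs_sub_comm]; exact le_abs_self _
      _ ≤ _ := le_max_left _ _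
  have hE2 : b - c ≤ E := by
    rw [hE]; exact le_trans (le_abs_self _) (le_max_right _ _)
  have hDE : D < E := by
    have h1 : D < ((b - a) + (d - c)) / 2 := by
      rw [hDm, hm2]; apply max_lt <;> linarith
    linarith
  have key1 : min (d - a) (b - c) ≤ D := by
    by_contra hcon
    push_neg at hcon
    rw [lt_min_iff] at hcon
    have : m₁ < m₂ := by
      rw [hm1]
      apply max_lt
      · rw [abs_lt]; constructor <;> [skip; skip] <;> nlinarith [hcon.1, hcon.2, hDu, hDv, hDm]
      · rw [abs_lt]; constructor <;> [skip; skip] <;> nlinarith [hcon.1, hcon.2, hDu, hDv, hDm]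
    linarith [hm.le, this]
  have hEmax : E ≤ max (d - a) (b - c) := by
    rw [hE]
    apply max_le
    · rw [abs_le]
      constructor
      · have := le_max_left (d - a) (b - c); linarith
      · have := le_max_right (d - a) (b - c); linarith
    · rw [abs_le]
      constructor
      · have := le_max_left (d - a) (b - c); linarith
      · exact le_max_right _ _
  -- self-hom vanishing for any ε ≥ D
  have self_zero : ∀ ε : ℝ, D ≤ ε →
      ¬ HomNeZero (intervalModule a b) ((intervalModule a b).shift (2*ε).toNNReal) ∧
      ¬ HomNeZero (intervalModule c d) ((intervalModule c d).shift (2*ε).toNNReal) := by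
    intro ε hDε
    have hε0 : 0 ≤ ε := le_trans hD0.le hDε
    have hco : (((2*ε).toNNReal : ℝ≥0) : ℝ) = 2*ε := Real.coe_toNNReal _ (by linarith)
    constructor
    · rw [homNeZero_iff a b a b ha hab ha hab, hco]
      rintro ⟨-, h2, -⟩
      linarith
    · rw [homNeZero_iff c d c d hc hcd hc hcd, hco]
      rintro ⟨-, h2, -⟩
      linarith
  refine ⟨hDE, ?_, ?_⟩
  · intro ε hDε hεE
    have hε0 : 0 ≤ ε := le_trans hD0.le hDε
    have hco : ((ε.toNNReal : ℝ≥0) : ℝ) = ε := Real.coe_toNNReal _ hε0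
    have hMN : HomNeZero (intervalModule a b) ((intervalModule c d).shift ε.toNNReal) ↔
        ε < d - a := by
      rw [homNeZero_iff a b c d ha hab hc hcd, hco]
      constructor
      · rintro ⟨-, h2, -⟩; linarith
      · intro h; exact ⟨by linarith, by linarith, by linarith⟩
    have hNM : HomNeZero (intervalModule c d) ((intervalModule a b).shift ε.toNNReal) ↔
        ε < b - c := by
      rw [homNeZero_iff c d a b hc hcd ha hab, hco]
      constructor
      · rintro ⟨-, h2, -⟩; linarith
      · intro h; exact ⟨by linarith, by linarith, by linarith⟩
    refine ⟨?_, self_zero ε hDε⟩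
    rcases lt_or_ge ε (d - a) with h1 | h1 <;> rcases lt_or_ge ε (b - c) with h2 | h2
    · exfalso
      have : ε < min (d - a) (b - c) := lt_min_iff.mpr ⟨h1, h2⟩
      linarith
    · exact Or.inl ⟨hMN.mpr h1, fun hcon => absurd (hNM.mp hcon) (by linarith)⟩
    · exact Or.inr ⟨hNM.mpr h2, fun hcon => absurd (hMN.mp hcon) (by linarith)⟩
    · exfalso
      have := max_le h1 h2
      linarith
  · intro ε hEε
    have hDε : D ≤ ε := le_trans hDE.le hEε
    have hε0 : 0 ≤ ε := le_trans hD0.le hDε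
    have hco : ((ε.toNNReal : ℝ≥0) : ℝ) = ε := Real.coe_toNNReal _ hε0
    refine ⟨?_, ?_, self_zero ε hDε⟩
    · rw [homNeZero_iff a b c d ha hab hc hcd, hco]
      rintro ⟨-, h2, -⟩; linarith
    · rw [homNeZero_iff c d a b hc hcd ha hab, hco]
      rintro ⟨-, h2, -⟩; linarith
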